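/- Let n ≥ k ≥ 1 be integers and set s = ⌊n/k⌋. Then the spectral radius of the Turán graph satisfies ρ(T_{n,k}) = (1/2)·( n − 2s − 1 + √( (n − 2s − 1)² + 4s(s+1)(k−1) ) ). -/

import Mathlib

open SimpleGraph Finset

attribute [local instance] Classical.propDecidable

/-- The spectral radius (largest adjacency eigenvalue) of a graph on `Fin n`. -/
noncomputable def adjSpectralRadius {n : ℕ} (G : SimpleGraph (Fin n)) : ℝ :=
  sSup (spectrum ℝ (G.adjMatrix ℝ))

/-- `G` contains a copy of `H` (a subgraph isomorphic to `H`). -/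
def Contains {α β : Type*} (G : SimpleGraph α) (H : SimpleGraph β) : Prop :=
  ∃ f : β ↪ α, ∀ a b, H.Adj a b → G.Adj (f a) (f b)

/-- The book `B_s`: `s` triangles sharing a common edge, i.e. `K_{2,s}` plus the
edge inside the part of size two. -/
def book (s : ℕ) : SimpleGraph (Fin 2 ⊕ Fin s) :=
  SimpleGraph.fromRel (fun x _ => x.isLeft = true)

/-- The theta graph `θ_{r+1} = θ(1,2,r+1)`: vertices `0,…,r+1` form a path of length
`r+1`, the edge `0 ~ (r+1)`, and vertex `r+2` is adjacent to `0` and `r+1`. -/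
def theta (r : ℕ) : SimpleGraph (Fin (r + 3)) :=
  SimpleGraph.fromRel (fun x y =>
    (x.val + 1 = y.val ∧ y.val ≤ r + 1) ∨
    (x.val = 0 ∧ y.val = r + 1) ∨
    (x.val = r + 2 ∧ (y.val = 0 ∨ y.val = r + 1)))

/-- The number of edges of a graph. -/
noncomputable def edgeCount {V : Type*} (G : SimpleGraph V) : ℕ := G.edgeSet.ncard

/-- The number of ordered pairs `(a,b) ∈ s × t` with `a ~ b`.  For disjoint `s` and `t`
this is the number `e(s,t)` of edges between `s` and `t`; for `s = t` it is `2·e(s)`. -/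
noncomputable def ordPairs {V : Type*} (G : SimpleGraph V) (s t : Finset V) : ℕ :=
  ((s ×ˢ t).filter fun p => G.Adj p.1 p.2).card

/-- The number of edges inside a vertex subset `s`. -/
noncomputable def edgesIn {V : Type*} (G : SimpleGraph V) (s : Finset V) : ℕ :=
  (G.induce (s : Set V)).edgeSet.ncard

open Module Matrix
lemma mem_spectrum_iff_exists_eigvec {n : ℕ} (A : Matrix (Fin n) (Fin n) ℝ) (μ : ℝ) :
    μ ∈ spectrum ℝ A ↔ ∃ v, v ≠ 0 ∧ A.mulVec v = μ • v := by
  rw [← AlgEquiv.spectrum_eq Matrix.toLinAlgEquiv' A,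
      ← Module.End.hasEigenvalue_iff_mem_spectrum]
  constructor
  · intro h
    obtain ⟨v, hv⟩ := h.exists_hasEigenvector
    refine ⟨v, hv.2, ?_⟩
    have := hv.apply_eq_smul
    simpa [Matrix.toLinAlgEquiv'_apply] using this
  · rintro ⟨v, hv0, hv⟩
    refine Module.End.hasEigenvalue_of_hasEigenvector (x := v)
      ⟨Module.End.mem_eigenspace_iff.mpr ?_, hv0⟩
    simpa [Matrix.toLinAlgEquiv'_apply] using hv

set_option maxHeartbeats 2000000 in
lemma turan_sSup_spectrum (n k : ℕ) (hk : 1 ≤ k) (hn : k ≤ n)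
    (G : SimpleGraph (Fin n)) [inst : DecidableRel G.Adj]
    (hadj : ∀ v w : Fin n, G.Adj v w ↔ ¬ (v.val % k = w.val % k)) :
    sSup (spectrum ℝ (G.adjMatrix ℝ)) =
      ((n : ℝ) - 2 * (n / k : ℕ) - 1 +
        Real.sqrt (((n : ℝ) - 2 * (n / k : ℕ) - 1) ^ 2 +
          4 * (n / k : ℕ) * ((n / k : ℕ) + 1) * ((k : ℝ) - 1))) / 2 := by
  have hk0 : 0 < k := hk
  have hn0 : 0 < n := lt_of_lt_of_le hk0 hn
  set s : ℕ := n / k with hsdef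
  set r : ℕ := n % k with hrdef
  have hs1 : 1 ≤ s := (Nat.one_le_div_iff hk0).mpr hn
  have hrk : r < k := Nat.mod_lt n hk0
  have hnkr : k * s + r = n := Nat.div_add_mod n k
  have hk1R : (1:ℝ) ≤ (k:ℝ) := by exact_mod_cast hk
  have hs1R : (1:ℝ) ≤ (s:ℝ) := by exact_mod_cast hs1
  have hnR : (n:ℝ) = (k:ℝ) * (s:ℝ) + (r:ℝ) := by exact_mod_cast hnkr.symm
  have hD0 : (0:ℝ) ≤ ((n : ℝ) - 2 * (s:ℕ) - 1) ^ 2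
      + 4 * (s:ℕ) * ((s:ℕ) + 1) * ((k : ℝ) - 1) := by
    have h1 : (0:ℝ) ≤ 4 * (s:ℕ) * ((s:ℕ) + 1) * ((k : ℝ) - 1) :=
      mul_nonneg (by positivity) (by linarith)
    nlinarith [sq_nonneg ((n : ℝ) - 2 * (s:ℕ) - 1)]
  set ρ : ℝ := ((n : ℝ) - 2 * (s:ℕ) - 1 +
        Real.sqrt (((n : ℝ) - 2 * (s:ℕ) - 1) ^ 2 +
          4 * (s:ℕ) * ((s:ℕ) + 1) * ((k : ℝ) - 1))) / 2 with hρdef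
  have hsq : Real.sqrt (((n : ℝ) - 2 * (s:ℕ) - 1) ^ 2
      + 4 * (s:ℕ) * ((s:ℕ) + 1) * ((k : ℝ) - 1)) ^ 2
      = ((n : ℝ) - 2 * (s:ℕ) - 1) ^ 2 + 4 * (s:ℕ) * ((s:ℕ) + 1) * ((k : ℝ) - 1) :=
    Real.sq_sqrt hD0
  have hρ0 : 0 ≤ ρ := by
    have h1 : |(n : ℝ) - 2 * (s:ℕ) - 1| ≤ Real.sqrt (((n : ℝ) - 2 * (s:ℕ) - 1) ^ 2
        + 4 * (s:ℕ) * ((s:ℕ) + 1) * ((k : ℝ) - 1)) := by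
      rw [← Real.sqrt_sq_eq_abs]
      apply Real.sqrt_le_sqrt
      have h1 : (0:ℝ) ≤ 4 * (s:ℕ) * ((s:ℕ) + 1) * ((k : ℝ) - 1) :=
        mul_nonneg (by positivity) (by linarith)
      linarith
    have h2 := (abs_le.mp h1).1
    rw [hρdef]; linarith
  have hquad : ρ ^ 2 = ((n : ℝ) - 2 * (s:ℕ) - 1) * ρ
      + (s:ℕ) * ((s:ℕ) + 1) * ((k:ℝ) - 1) := by
    have h2 : 2 * ρ - ((n : ℝ) - 2 * (s:ℕ) - 1)
        = Real.sqrt (((n : ℝ) - 2 * (s:ℕ) - 1) ^ 2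
          + 4 * (s:ℕ) * ((s:ℕ) + 1) * ((k : ℝ) - 1)) := by
      rw [hρdef]; ring
    have h3 := congrArg (· ^ 2) h2
    rw [hsq] at h3
    nlinarith [h3]
  have hρs : (0:ℝ) < ρ + (s:ℕ) := by linarith
  have hρs1 : (0:ℝ) < ρ + (s:ℕ) + 1 := by linarith
  -- the eigenvector profile
  set g : ℕ → ℝ := fun j => (ρ + (s:ℕ) + if j % k < r then 1 else 0)⁻¹ with hgdef
  have hgval : ∀ j, g j = (ρ + (s:ℕ) + if j % k < r then 1 else 0)⁻¹ := fun j => rfl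
  have hgpos : ∀ j, 0 < g j := by
    intro j
    rw [hgval]
    apply inv_pos.mpr
    split_ifs <;> linarith
  -- counting the residue classes
  have hcard : ∀ j, j < k → (((range n).filter fun i => i % k = j).card : ℕ)
      = s + if j < r then 1 else 0 := by
    intro j hj
    have h1 := Nat.count_modEq_card n hk0 j
    rw [Nat.count_eq_card_filter_range] at h1
    have h2 : ((range n).filter fun i => i ≡ j [MOD k])
        = ((range n).filter fun i => i % k = j) := by
      apply Finset.filter_congr
      intro i _
      simp [Nat.ModEq, Nat.mod_eq_of_lt hj]
    rw [h2, Nat.mod_eq_of_lt hj] at h1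
    exact h1
  -- sum over one residue class
  have hclass : ∀ j, j < k → (∑ i ∈ (range n).filter (fun i => i % k = j), g i)
      = ((s:ℕ) + if j < r then (1:ℝ) else 0)
        * (ρ + (s:ℕ) + if j < r then (1:ℝ) else 0)⁻¹ := by
    intro j hj
    have h1 : ∀ i ∈ (range n).filter (fun i => i % k = j),
        g i = (ρ + (s:ℕ) + if j < r then (1:ℝ) else 0)⁻¹ := by
      intro i hi
      rw [Finset.mem_filter] at hi
      rw [hgval, hi.2]
    rw [Finset.sum_congr rfl h1, Finset.sum_const, hcard j hj, nsmul_eq_mul]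
    split_ifs <;> push_cast <;> ring
  -- total sum is 1
  have htot : (∑ i ∈ range n, g i) = 1 := by
    have hmaps : ∀ i ∈ range n, i % k ∈ range k := by
      intro i _; exact Finset.mem_range.mpr (Nat.mod_lt i hk0)
    rw [← Finset.sum_fiberwise_of_maps_to hmaps g]
    have h1 : ∀ j ∈ range k, (∑ i ∈ (range n).filter (fun i => i % k = j), g i)
        = if j < r then ((s:ℝ) + 1) * (ρ + (s:ℕ) + 1)⁻¹ else (s:ℝ) * (ρ + (s:ℕ))⁻¹ := by
      intro j hj
      rw [hclass j (Finset.mem_range.mp hj)]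
      split_ifs <;> simp
    rw [Finset.sum_congr rfl h1, Finset.sum_ite, Finset.sum_const, Finset.sum_const]
    have h2 : (range k).filter (fun j => j < r) = range r := by
      ext j; simp only [Finset.mem_filter, Finset.mem_range]
      omega
    have h3 : ((range k).filter (fun j => ¬ j < r)).card = k - r := by
      rw [Finset.filter_not, Finset.card_sdiff_of_subset (Finset.filter_subset _ _), h2]
      simp
    rw [h2, h3, Finset.card_range, nsmul_eq_mul, nsmul_eq_mul]
    have hkr : ((k - r : ℕ) : ℝ) = (k:ℝ) - (r:ℝ) := by
      rw [Nat.cast_sub hrk.le]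
    rw [hkr]
    have hne1 : (ρ + (s:ℕ)) ≠ 0 := ne_of_gt hρs
    have hne2 : (ρ + (s:ℕ) + 1) ≠ 0 := ne_of_gt hρs1
    field_simp
    linear_combination (-1 : ℝ) * hquad - ρ * hnR
  -- the eigenvector
  set x : Fin n → ℝ := fun v => g v.val with hxdef
  have hxpos : ∀ v, 0 < x v := fun v => hgpos v.val
  have hxne : x ≠ 0 := by
    intro h
    have := congrFun h ⟨0, hn0⟩
    exact absurd this (ne_of_gt (hxpos ⟨0, hn0⟩))
  -- the eigenvalue equation
  have heig : (G.adjMatrix ℝ).mulVec x = ρ • x := by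
    funext v
    have hstep : ∀ w : Fin n, (G.adjMatrix ℝ) v w * x w
        = g w.val - (if w.val % k = v.val % k then g w.val else 0) := by
      intro w
      rw [SimpleGraph.adjMatrix_apply]
      by_cases h : G.Adj v w
      · rw [if_pos h]
        rw [hadj] at h
        rw [if_neg (fun hh => h hh.symm)]
        simp [hxdef]
      · rw [if_neg h]
        rw [hadj, not_not] at h
        rw [if_pos h.symm]
        ring
    have hmv : ((G.adjMatrix ℝ).mulVec x) v
        = (∑ w : Fin n, g w.val)
          - ∑ w : Fin n, (if w.val % k = v.val % k then g w.val else 0) := by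
      simp only [Matrix.mulVec, dotProduct]
      rw [Finset.sum_congr rfl (fun w _ => hstep w), Finset.sum_sub_distrib]
    have hT : (∑ w : Fin n, g w.val) = 1 := by
      rw [Fin.sum_univ_eq_sum_range (fun i => g i) n]; exact htot
    have hC : (∑ w : Fin n, (if w.val % k = v.val % k then g w.val else 0))
        = ((s:ℕ) + if v.val % k < r then (1:ℝ) else 0)
          * (ρ + (s:ℕ) + if v.val % k < r then (1:ℝ) else 0)⁻¹ := by
      rw [Fin.sum_univ_eq_sum_range (fun i => if i % k = v.val % k then g i else 0) n]
      rw [← Finset.sum_filter]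
      exact hclass (v.val % k) (Nat.mod_lt _ hk0)
    rw [hmv, hT, hC]
    have hxv : x v = (ρ + (s:ℕ) + if v.val % k < r then (1:ℝ) else 0)⁻¹ := rfl
    rw [Pi.smul_apply, smul_eq_mul, hxv]
    split_ifs with h
    · field_simp; ring
    · field_simp; ring
  -- membership
  have hmem : ρ ∈ spectrum ℝ (G.adjMatrix ℝ) :=
    (mem_spectrum_iff_exists_eigvec _ _).mpr ⟨x, hxne, heig⟩
  -- upper bound
  have hub : ∀ μ ∈ spectrum ℝ (G.adjMatrix ℝ), μ ≤ ρ := by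
    intro μ hμ
    obtain ⟨y, hy0, hyA⟩ := (mem_spectrum_iff_exists_eigvec _ _).mp hμ
    set A := G.adjMatrix ℝ with hAdef
    set z : Fin n → ℝ := fun v => |y v| with hzdef
    have hznn : ∀ v, 0 ≤ z v := fun v => abs_nonneg _
    have hAnn : ∀ v w, 0 ≤ A v w := by
      intro v w
      rw [hAdef, SimpleGraph.adjMatrix_apply]
      split_ifs <;> norm_num
    have hTr : Aᵀ = A := by rw [hAdef]; exact SimpleGraph.transpose_adjMatrix _
    have hAsymm : ∀ v w, A v w = A w v := fun v w =>
      (congrFun (congrFun hTr.symm w) v).symm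
    have habs : ∀ v, |μ| * z v ≤ (A.mulVec z) v := by
      intro v
      have h1 : |μ| * z v = |(A.mulVec y) v| := by
        rw [hyA]
        simp [hzdef, abs_mul]
      rw [h1]
      simp only [Matrix.mulVec, dotProduct]
      refine (Finset.abs_sum_le_sum_abs _ _).trans ?_
      apply Finset.sum_le_sum
      intro w _
      rw [abs_mul, abs_of_nonneg (hAnn v w)]
    have hsum1 : |μ| * (∑ v, x v * z v) ≤ ∑ v, x v * (A.mulVec z) v := by
      rw [Finset.mul_sum]
      apply Finset.sum_le_sum
      intro v _
      calc |μ| * (x v * z v) = x v * (|μ| * z v) := by ring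
        _ ≤ x v * (A.mulVec z) v := mul_le_mul_of_nonneg_left (habs v) (hxpos v).le
    have hsymm : (∑ v, x v * (A.mulVec z) v) = ∑ w, (A.mulVec x) w * z w := by
      calc (∑ v, x v * (A.mulVec z) v)
          = ∑ v, ∑ w, x v * (A v w * z w) := by
            simp only [Matrix.mulVec, dotProduct, Finset.mul_sum]
        _ = ∑ w, ∑ v, x v * (A v w * z w) := Finset.sum_comm
        _ = ∑ w, (A.mulVec x) w * z w := by
            apply Finset.sum_congr rfl
            intro w _
            simp only [Matrix.mulVec, dotProduct, Finset.sum_mul]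
            apply Finset.sum_congr rfl
            intro v _
            rw [hAsymm v w]; ring
    have hsum2 : (∑ w, (A.mulVec x) w * z w) = ρ * (∑ v, x v * z v) := by
      rw [Finset.mul_sum]
      apply Finset.sum_congr rfl
      intro w _
      rw [hAdef, heig, Pi.smul_apply, smul_eq_mul]
      ring
    have hxz : 0 < ∑ v, x v * z v := by
      obtain ⟨v, hv⟩ := Function.ne_iff.mp hy0
      apply Finset.sum_pos'
      · intro w _; exact mul_nonneg (hxpos w).le (hznn w)
      · refine ⟨v, Finset.mem_univ v, ?_⟩
        apply mul_pos (hxpos v)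
        simpa [hzdef] using abs_pos.mpr hv
    have hfin : |μ| ≤ ρ := by
      have h := hsum1.trans (le_of_eq (hsymm.trans hsum2))
      exact le_of_mul_le_mul_right h hxz
    exact (le_abs_self μ).trans hfin
  exact IsGreatest.csSup_eq ⟨hmem, hub⟩

/-- The spectral radius of the Turán graph `T_{n,k}`, where `s = ⌊n/k⌋`. -/
theorem stmt8 (n k : ℕ) (hk : 1 ≤ k) (hn : k ≤ n) :
    adjSpectralRadius (turanGraph n k) =
      ((n : ℝ) - 2 * (n / k : ℕ) - 1 +
        Real.sqrt (((n : ℝ) - 2 * (n / k : ℕ) - 1) ^ 2 +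
          4 * (n / k : ℕ) * ((n / k : ℕ) + 1) * ((k : ℝ) - 1))) / 2 := by
  simp only [adjSpectralRadius]
  exact @turan_sSup_spectrum n k hk hn (turanGraph n k)
    (fun a b => Classical.propDecidable ((turanGraph n k).Adj a b))
    (fun v w => by simp [turanGraph])
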